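/- Let $P=(p_1,\dots,p_n),Q,R\in[1,\infty)^n$ with $1/p_j+1/q_j=1/r_j+1$ for each $j$. If $f\in L^P(\mathbb{R}^n)$ and $g\in L^Q(\mathbb{R}^n)$ are real-valued (not necessarily nonnegative), then for almost every $x\in\mathbb{R}^n$ the integral $f*g(x)=\int_{\mathbb{R}^n}f(x-t)g(t)\,dt$ converges absolutely, and $\|f*g\|_{L^R}\le\|f\|_{L^P}\|g\|_{L^Q}$. -/

import Mathlib

open MeasureTheory ENNReal Filter

/-- The iterated mixed Lebesgue norm on `ℝ^n`: integrate first in the coordinate `t₁`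
with exponent `P 0`, then in `t₂` with exponent `P 1`, and so on. -/
noncomputable def mixedLNorm : (n : ℕ) → (Fin n → ℝ) → ((Fin n → ℝ) → ℝ≥0∞) → ℝ≥0∞
  | 0, _, h => h (fun i => i.elim0)
  | n + 1, P, h =>
      mixedLNorm n (fun i => P i.succ)
        (fun v => (∫⁻ t : ℝ, h (Fin.cons t v) ^ P 0) ^ (1 / P 0))

section Helpers

open Filter Set

lemma iSup_min_natCast (a : ℝ≥0∞) : ⨆ n : ℕ, min a n = a := by
  refine le_antisymm (iSup_le fun n => min_le_left _ _) ?_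
  rcases eq_or_ne a ∞ with rfl | ha
  · have h : ∀ n : ℕ, min (⊤ : ℝ≥0∞) (n : ℝ≥0∞) = n := fun n => min_eq_right le_top
    simp only [h, ENNReal.iSup_natCast, le_refl]
  · obtain ⟨n, hn⟩ := ENNReal.exists_nat_gt ha.lt_top.ne
    exact le_iSup_of_le n (le_min le_rfl hn.le)

lemma measurable_finCons {n : ℕ} :
    Measurable (fun p : ℝ × (Fin n → ℝ) => (Fin.cons p.1 p.2 : Fin (n + 1) → ℝ)) := by
  refine measurable_pi_iff.2 fun i => ?_
  refine Fin.cases ?_ (fun j => ?_) i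
  · simpa using measurable_fst
  · simpa [Function.comp_def] using (measurable_pi_apply j).comp measurable_snd

lemma cons_sub_cons {n : ℕ} (a b : ℝ) (v w : Fin n → ℝ) :
    (Fin.cons a v : Fin (n+1) → ℝ) - Fin.cons b w = Fin.cons (a - b) (v - w) := by
  funext i
  refine Fin.cases ?_ (fun j => ?_) i <;> simp [Pi.sub_apply]

/-- Splitting the integral over `ℝ^{n+1}` into the first coordinate and the rest. -/
lemma lintegral_fin_succ {n : ℕ} (φ : (Fin (n + 1) → ℝ) → ℝ≥0∞) (hφ : Measurable φ) :
    ∫⁻ x, φ x = ∫⁻ v : Fin n → ℝ, ∫⁻ t : ℝ, φ (Fin.cons t v) := by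
  have h := measurePreserving_piFinSuccAbove (fun _ : Fin (n + 1) => (volume : Measure ℝ)) 0
  set e := MeasurableEquiv.piFinSuccAbove (fun _ : Fin (n + 1) => ℝ) 0 with he
  have hcomp : ∫⁻ x, (fun y => φ (e.symm y)) (e x) = ∫⁻ y, φ (e.symm y)
      ∂((volume : Measure ℝ).prod (Measure.pi fun _ : Fin n => (volume : Measure ℝ))) := by
    simpa [volume_pi] using h.lintegral_comp (hφ.comp e.symm.measurable)
  have h1 : ∫⁻ x, φ x = ∫⁻ y, φ (e.symm y)
      ∂((volume : Measure ℝ).prod (Measure.pi fun _ : Fin n => (volume : Measure ℝ))) := by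
    rw [← hcomp]
    simp [volume_pi]
  rw [h1, lintegral_prod_symm (fun y => φ (e.symm y)) ((hφ.comp e.symm.measurable).aemeasurable)]
  congr 1
  funext v
  congr 1
  funext t
  congr 1
  show e.symm (t, v) = Fin.cons t v
  rw [he]
  simp only [MeasurableEquiv.piFinSuccAbove, MeasurableEquiv.symm_mk, MeasurableEquiv.coe_mk,
    Equiv.symm_symm, Fin.insertNthEquiv_apply]
  exact Fin.insertNth_zero' t v
/-- One-dimensional Young inequality for `ℝ≥0∞`-valued functions on `ℝ`. -/
lemma young_one_dim {p q r : ℝ} (hp : 1 ≤ p) (hq : 1 ≤ q) (hr : 1 ≤ r)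
    (hpqr : 1 / p + 1 / q = 1 / r + 1) (H K : ℝ → ℝ≥0∞) (mH : Measurable H)
    (mK : Measurable K) :
    (∫⁻ x : ℝ, (∫⁻ t : ℝ, H (x - t) * K t) ^ r) ^ (1 / r)
      ≤ (∫⁻ x : ℝ, H x ^ p) ^ (1 / p) * (∫⁻ x : ℝ, K x ^ q) ^ (1 / q) := by
  have hp0 : (0:ℝ) < p := lt_of_lt_of_le zero_lt_one hp
  have hq0 : (0:ℝ) < q := lt_of_lt_of_le zero_lt_one hq
  have hr0 : (0:ℝ) < r := lt_of_lt_of_le zero_lt_one hr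
  set A := ∫⁻ x : ℝ, H x ^ p with hA
  set B := ∫⁻ x : ℝ, K x ^ q with hB
  have htrans : ∀ x : ℝ, (∫⁻ t : ℝ, H (x - t) ^ p) = A := fun x =>
    (Measure.measurePreserving_sub_left volume x).lintegral_comp (mH.pow_const p)
  have htrans' : ∀ t : ℝ, (∫⁻ x : ℝ, H (x - t) ^ p) = A := fun t =>
    (measurePreserving_sub_right volume t).lintegral_comp (mH.pow_const p)
  rcases eq_or_ne A 0 with hA0 | hA0
  · have hzero : ∀ x : ℝ, (∫⁻ t : ℝ, H (x - t) * K t) = 0 := by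
      intro x
      have hm1 : Measurable fun t : ℝ => H (x - t) ^ p := by fun_prop
      have hm2 : Measurable fun t : ℝ => H (x - t) * K t := by fun_prop
      have h1 : (∫⁻ t : ℝ, H (x - t) ^ p) = 0 := by rw [htrans x, hA0]
      have h2 : ∀ᵐ t : ℝ, H (x - t) ^ p = 0 := (lintegral_eq_zero_iff hm1).1 h1
      rw [lintegral_eq_zero_iff hm2]
      filter_upwards [h2] with t ht
      have : H (x - t) = 0 := by
        simpa [ENNReal.rpow_eq_zero_iff, hp0, hp0.not_gt] using ht
      simp [this]
    simp only [hzero, ENNReal.zero_rpow_of_pos hr0, lintegral_zero,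
      ENNReal.zero_rpow_of_pos (by positivity : (0:ℝ) < 1 / r)]
    exact zero_le
  rcases eq_or_ne B 0 with hB0 | hB0
  · have hK0 : ∀ᵐ t : ℝ, K t = 0 := by
      have := (lintegral_eq_zero_iff (mK.pow_const q)).1 hB0
      filter_upwards [this] with x hx
      simpa [ENNReal.rpow_eq_zero_iff, hq0, hq0.not_gt] using hx
    have hzero : ∀ x : ℝ, (∫⁻ t : ℝ, H (x - t) * K t) = 0 := by
      intro x
      have hm2 : Measurable fun t : ℝ => H (x - t) * K t := by fun_prop
      rw [lintegral_eq_zero_iff hm2]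
      filter_upwards [hK0] with t ht
      simp [ht]
    simp only [hzero, ENNReal.zero_rpow_of_pos hr0, lintegral_zero,
      ENNReal.zero_rpow_of_pos (by positivity : (0:ℝ) < 1 / r)]
    exact zero_le
  rcases eq_or_ne A ∞ with hAtop | hAtop
  · have : A ^ (1 / p) * B ^ (1 / q) = ∞ := by
      rw [hAtop, ENNReal.top_rpow_of_pos (by positivity)]
      refine ENNReal.top_mul ?_
      simp only [ne_eq, ENNReal.rpow_eq_zero_iff, not_or, not_and, not_lt]
      exact ⟨fun h => absurd h hB0, fun _ => by positivity⟩
    rw [this]; exact le_top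
  rcases eq_or_ne B ∞ with hBtop | hBtop
  · have : A ^ (1 / p) * B ^ (1 / q) = ∞ := by
      rw [hBtop, ENNReal.top_rpow_of_pos (by positivity)]
      refine ENNReal.mul_top ?_
      simp only [ne_eq, ENNReal.rpow_eq_zero_iff, not_or, not_and, not_lt]
      exact ⟨fun h => absurd h hA0, fun _ => by positivity⟩
    rw [this]; exact le_top
  -- main case
  have ha2 : (0:ℝ) ≤ 1 / p - 1 / r := by
    have h1 : 1 / q ≤ 1 := by rw [div_le_one hq0]; exact hq
    linarith
  have ha3 : (0:ℝ) ≤ 1 / q - 1 / r := by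
    have h1 : 1 / p ≤ 1 := by rw [div_le_one hp0]; exact hp
    linarith
  set Φ : ℝ → ℝ≥0∞ := fun x => ∫⁻ t : ℝ, H (x - t) ^ p * K t ^ q with hΦ
  have mΦ : Measurable Φ := by
    apply Measurable.lintegral_prod_right'
      (f := fun z : ℝ × ℝ => H (z.1 - z.2) ^ p * K z.2 ^ q)
    fun_prop
  have hΦint : ∫⁻ x : ℝ, Φ x = A * B := by
    rw [hΦ, lintegral_lintegral_swap (by fun_prop)]
    have hinner : ∀ t : ℝ, (∫⁻ x : ℝ, H (x - t) ^ p * K t ^ q) = K t ^ q * A := by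
      intro t
      rw [lintegral_mul_const _ (show Measurable fun x : ℝ => H (x - t) ^ p by fun_prop),
        htrans' t, mul_comm]
    simp only [hinner]
    rw [lintegral_mul_const _ (mK.pow_const q), mul_comm]
  -- pointwise three-factor Hölder
  have pointwise : ∀ u v : ℝ≥0∞,
      (u ^ p * v ^ q) ^ (1 / r) * (u ^ p) ^ (1 / p - 1 / r) * (v ^ q) ^ (1 / q - 1 / r)
        = u * v := by
    intro u v
    rw [ENNReal.mul_rpow_of_nonneg _ _ (by positivity : (0:ℝ) ≤ 1 / r),
      ← ENNReal.rpow_mul u, ← ENNReal.rpow_mul v, ← ENNReal.rpow_mul u, ← ENNReal.rpow_mul v]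
    rw [show u ^ (p * (1 / r)) * v ^ (q * (1 / r)) * u ^ (p * (1 / p - 1 / r))
        * v ^ (q * (1 / q - 1 / r))
        = (u ^ (p * (1 / r)) * u ^ (p * (1 / p - 1 / r)))
          * (v ^ (q * (1 / r)) * v ^ (q * (1 / q - 1 / r))) from by ring]
    rw [← ENNReal.rpow_add_of_nonneg (x := u) _ _ (by positivity) (by positivity),
      ← ENNReal.rpow_add_of_nonneg (x := v) _ _ (by positivity) (by positivity)]
    rw [show p * (1 / r) + p * (1 / p - 1 / r) = 1 from by field_simp; ring,
      show q * (1 / r) + q * (1 / q - 1 / r) = 1 from by field_simp; ring,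
      ENNReal.rpow_one, ENNReal.rpow_one]
  have key : ∀ x : ℝ, (∫⁻ t : ℝ, H (x - t) * K t)
      ≤ Φ x ^ (1 / r) * (A ^ (1 / p - 1 / r) * B ^ (1 / q - 1 / r)) := by
    intro x
    have h3 := ENNReal.lintegral_prod_norm_pow_le (μ := (volume : Measure ℝ)) Finset.univ
      (f := ![fun t => H (x - t) ^ p * K t ^ q, fun t => H (x - t) ^ p, fun t => K t ^ q])
      (fun i _ => by
        fin_cases i
        · exact (show Measurable fun t : ℝ => H (x - t) ^ p * K t ^ q by fun_prop).aemeasurable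
        · exact (show Measurable fun t : ℝ => H (x - t) ^ p by fun_prop).aemeasurable
        · exact (mK.pow_const q).aemeasurable)
      (p := ![1 / r, 1 / p - 1 / r, 1 / q - 1 / r])
      (by
        rw [Fin.sum_univ_three]
        simp only [Matrix.cons_val_zero, Matrix.cons_val_one, Matrix.head_cons,
          Matrix.cons_val_two, Matrix.tail_cons]
        linarith)
      (fun i _ => by
        fin_cases i <;>
          simp only [Matrix.cons_val_zero, Matrix.cons_val_one, Matrix.head_cons,
            Matrix.cons_val_two, Matrix.tail_cons]
        · exact le_of_lt (one_div_pos.2 hr0)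
        · exact ha2
        · exact ha3)
    simp only [Fin.prod_univ_three, Matrix.cons_val_zero, Matrix.cons_val_one, Matrix.head_cons,
      Matrix.cons_val_two, Matrix.tail_cons] at h3
    calc (∫⁻ t : ℝ, H (x - t) * K t)
        = ∫⁻ t : ℝ, (H (x - t) ^ p * K t ^ q) ^ (1 / r) * (H (x - t) ^ p) ^ (1 / p - 1 / r)
            * (K t ^ q) ^ (1 / q - 1 / r) :=
          lintegral_congr fun t => (pointwise (H (x - t)) (K t)).symm
      _ ≤ (∫⁻ t : ℝ, H (x - t) ^ p * K t ^ q) ^ (1 / r)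
            * (∫⁻ t : ℝ, H (x - t) ^ p) ^ (1 / p - 1 / r)
            * (∫⁻ t : ℝ, K t ^ q) ^ (1 / q - 1 / r) := h3
      _ = Φ x ^ (1 / r) * (A ^ (1 / p - 1 / r) * B ^ (1 / q - 1 / r)) := by
          rw [htrans x, mul_assoc]
  set C := A ^ (1 / p - 1 / r) * B ^ (1 / q - 1 / r) with hC
  have hCtop : C ≠ ∞ :=
    ENNReal.mul_ne_top (ENNReal.rpow_ne_top_of_nonneg ha2 hAtop)
      (ENNReal.rpow_ne_top_of_nonneg ha3 hBtop)
  calc (∫⁻ x : ℝ, (∫⁻ t : ℝ, H (x - t) * K t) ^ r) ^ (1 / r)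
      ≤ (∫⁻ x : ℝ, (Φ x ^ (1 / r) * C) ^ r) ^ (1 / r) := by
        refine ENNReal.rpow_le_rpow (lintegral_mono fun x => ?_) (by positivity)
        exact ENNReal.rpow_le_rpow (key x) hr0.le
    _ = (∫⁻ x : ℝ, Φ x * C ^ r) ^ (1 / r) := by
        congr 1
        refine lintegral_congr fun x => ?_
        rw [ENNReal.mul_rpow_of_nonneg _ _ hr0.le, ← ENNReal.rpow_mul,
          one_div_mul_cancel hr0.ne', ENNReal.rpow_one]
    _ = (A * B * C ^ r) ^ (1 / r) := by
        rw [lintegral_mul_const _ mΦ, hΦint]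
    _ = (A * B) ^ (1 / r) * C := by
        rw [ENNReal.mul_rpow_of_nonneg _ _ (by positivity : (0:ℝ) ≤ 1 / r),
          ← ENNReal.rpow_mul, mul_one_div_cancel hr0.ne', ENNReal.rpow_one]
    _ = A ^ (1 / p) * B ^ (1 / q) := by
        rw [hC, ENNReal.mul_rpow_of_nonneg _ _ (by positivity : (0:ℝ) ≤ 1 / r)]
        rw [show A ^ (1 / r) * B ^ (1 / r) * (A ^ (1 / p - 1 / r) * B ^ (1 / q - 1 / r))
            = (A ^ (1 / r) * A ^ (1 / p - 1 / r)) * (B ^ (1 / r) * B ^ (1 / q - 1 / r)) from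
            by ring]
        rw [← ENNReal.rpow_add_of_nonneg (x := A) _ _ (by positivity) ha2,
          ← ENNReal.rpow_add_of_nonneg (x := B) _ _ (by positivity) ha3,
          show 1 / r + (1 / p - 1 / r) = 1 / p from by ring,
          show 1 / r + (1 / q - 1 / r) = 1 / q from by ring]
/-- Minkowski's integral inequality for `ℝ≥0∞`-valued functions. -/
lemma minkowski_lintegral {α β : Type*} [MeasurableSpace α] [MeasurableSpace β]
    (μ : Measure α) (ν : Measure β) [SigmaFinite μ] [SigmaFinite ν]
    {p : ℝ} (hp : 1 ≤ p) (f : α → β → ℝ≥0∞) (hf : Measurable (Function.uncurry f)) :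
    (∫⁻ x, (∫⁻ y, f x y ∂ν) ^ p ∂μ) ^ (1 / p)
      ≤ ∫⁻ y, (∫⁻ x, f x y ^ p ∂μ) ^ (1 / p) ∂ν := by
  have hfx : ∀ x, Measurable fun y => f x y := fun x => hf.of_uncurry_left
  have hfy : ∀ y, Measurable fun x => f x y := fun y => hf.of_uncurry_right
  set F : α → ℝ≥0∞ := fun x => ∫⁻ y, f x y ∂ν with hFdef
  have mF : Measurable F := hf.lintegral_prod_right'
  rcases eq_or_lt_of_le hp with hp1 | hp1
  · rw [← hp1]
    simp only [one_div_one, ENNReal.rpow_one]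
    exact le_of_eq (lintegral_lintegral_swap hf.aemeasurable)
  have hp0 : (0:ℝ) < p := lt_trans zero_lt_one hp1
  set p' : ℝ := p / (p - 1) with hp'def
  have hpp1 : (0:ℝ) < p - 1 := by linarith
  have hconj : p'.HolderConjugate p := by
    exact ((Real.holderConjugate_iff_eq_conjExponent hp1).2 hp'def).symm
  have hsum : 1 / p' + 1 / p = 1 := by rw [one_div, one_div]; exact hconj.inv_add_inv_eq_one
  set RHS := ∫⁻ y, (∫⁻ x, f x y ^ p ∂μ) ^ (1 / p) ∂ν with hRHS
  have mray : Measurable fun y => (∫⁻ x, f x y ^ p ∂μ) ^ (1 / p) :=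
    (Measurable.lintegral_prod_left' (hf.pow_const p)).pow_const _
  set S : ℕ → Set α := spanningSets μ with hSdef
  set Fn : ℕ → α → ℝ≥0∞ := fun n x => (S n).indicator (fun x' => min (F x') n) x with hFn
  have mFn : ∀ n, Measurable (Fn n) :=
    fun n => (mF.min measurable_const).indicator (measurableSet_spanningSets μ n)
  have hFnle : ∀ n x, Fn n x ≤ F x := fun n x =>
    le_trans (Set.indicator_le_self _ _ x) (min_le_left _ _)
  have hFnmono : ∀ ⦃m n : ℕ⦄, m ≤ n → ∀ x, Fn m x ≤ Fn n x := by
    intro m n hmn x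
    by_cases hx : x ∈ S m
    · have hx' : x ∈ S n := monotone_spanningSets μ hmn hx
      rw [hFn]
      simp only [Set.indicator_of_mem hx, Set.indicator_of_mem hx']
      exact min_le_min le_rfl (by exact_mod_cast hmn)
    · rw [hFn]
      simp only [Set.indicator_of_notMem hx]
      exact zero_le
  have hFnsup : ∀ x, (⨆ n, Fn n x) = F x := by
    intro x
    obtain ⟨m, hm⟩ : ∃ m, x ∈ S m := by
      have hx : x ∈ ⋃ n, S n := by rw [hSdef, iUnion_spanningSets]; trivial
      exact Set.mem_iUnion.1 hx
    refine le_antisymm (iSup_le fun n => hFnle n x) ?_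
    conv_lhs => rw [← iSup_min_natCast (F x)]
    refine iSup_le fun n => ?_
    have hxmem : x ∈ S (max m n) := monotone_spanningSets μ (le_max_left m n) hm
    refine le_iSup_of_le (max m n) ?_
    rw [hFn]
    simp only [Set.indicator_of_mem hxmem]
    exact min_le_min le_rfl (by exact_mod_cast le_max_right m n)
  have hMnfin : ∀ n, (∫⁻ x, Fn n x ^ p ∂μ) ≠ ∞ := by
    intro n
    have hle : ∀ x, Fn n x ^ p ≤ (S n).indicator (fun _ => (n : ℝ≥0∞) ^ p) x := by
      intro x
      by_cases hx : x ∈ S n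
      · rw [hFn]
        simp only [Set.indicator_of_mem hx]
        exact ENNReal.rpow_le_rpow (min_le_right _ _) hp0.le
      · rw [hFn]
        simp only [Set.indicator_of_notMem hx, ENNReal.zero_rpow_of_pos hp0, le_refl]
    refine ne_top_of_le_ne_top ?_ (lintegral_mono hle)
    rw [lintegral_indicator (measurableSet_spanningSets μ n) _, setLIntegral_const]
    exact ENNReal.mul_ne_top (ENNReal.rpow_ne_top_of_nonneg hp0.le (ENNReal.natCast_ne_top n))
      (measure_spanningSets_lt_top μ n).ne
  have hkey : ∀ n, (∫⁻ x, Fn n x ^ p ∂μ) ≤ RHS ^ p := by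
    intro n
    set M := ∫⁻ x, Fn n x ^ p ∂μ with hM
    rcases eq_or_ne M 0 with hM0 | hM0
    · rw [hM0]; exact zero_le
    have hMne : M ≠ ∞ := hMnfin n
    have step : M ≤ M ^ (1 / p') * RHS := by
      calc M = ∫⁻ x, Fn n x ^ (p - 1) * Fn n x ∂μ := by
            refine lintegral_congr fun x => ?_
            conv_lhs => rw [show p = (p - 1) + 1 from by ring]
            rw [ENNReal.rpow_add_of_nonneg _ _ (by linarith) zero_le_one, ENNReal.rpow_one]
        _ ≤ ∫⁻ x, Fn n x ^ (p - 1) * F x ∂μ :=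
            lintegral_mono fun x => mul_le_mul_right (hFnle n x) _
        _ = ∫⁻ x, ∫⁻ y, Fn n x ^ (p - 1) * f x y ∂ν ∂μ :=
            lintegral_congr fun x => (lintegral_const_mul _ (hfx x)).symm
        _ = ∫⁻ y, ∫⁻ x, Fn n x ^ (p - 1) * f x y ∂μ ∂ν :=
            lintegral_lintegral_swap
              ((((mFn n).comp measurable_fst).pow_const _).mul hf).aemeasurable
        _ ≤ ∫⁻ y, (∫⁻ x, (Fn n x ^ (p - 1)) ^ p' ∂μ) ^ (1 / p')
              * (∫⁻ x, f x y ^ p ∂μ) ^ (1 / p) ∂ν := by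
            refine lintegral_mono fun y => ?_
            exact ENNReal.lintegral_mul_le_Lp_mul_Lq μ hconj
              ((mFn n).pow_const _).aemeasurable ((hfy y).aemeasurable)
        _ = M ^ (1 / p') * RHS := by
            have hpow : ∀ x, (Fn n x ^ (p - 1)) ^ p' = Fn n x ^ p := by
              intro x
              rw [← ENNReal.rpow_mul]
              congr 1
              rw [hp'def]
              field_simp
            simp only [hpow]
            rw [lintegral_const_mul _ mray]
    have hcancel : M ^ (1 / p) ≤ RHS := by
      have hne0 : M ^ (1 / p') ≠ 0 := by
        refine (ENNReal.rpow_pos (pos_iff_ne_zero.2 hM0) hMne).ne'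
      have hnetop : M ^ (1 / p') ≠ ∞ :=
        ENNReal.rpow_ne_top_of_nonneg (by positivity) hMne
      refine (ENNReal.mul_le_mul_iff_right hne0 hnetop).1 ?_
      calc M ^ (1 / p') * M ^ (1 / p)
          = M := by
            rw [← ENNReal.rpow_add_of_nonneg _ _ (by positivity) (by positivity), hsum,
              ENNReal.rpow_one]
        _ ≤ M ^ (1 / p') * RHS := step
    calc M = (M ^ (1 / p)) ^ p := by
          rw [← ENNReal.rpow_mul, one_div_mul_cancel hp0.ne', ENNReal.rpow_one]
      _ ≤ RHS ^ p := ENNReal.rpow_le_rpow hcancel hp0.le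
  have hsup : (∫⁻ x, F x ^ p ∂μ) = ⨆ n, ∫⁻ x, Fn n x ^ p ∂μ := by
    rw [← lintegral_iSup (fun n => (mFn n).pow_const p)
      (fun i j h x => ENNReal.rpow_le_rpow (hFnmono h x) hp0.le)]
    refine lintegral_congr fun x => ?_
    have h1 : Tendsto (fun n => Fn n x) atTop (nhds (F x)) := by
      rw [← hFnsup x]
      exact tendsto_atTop_iSup fun i j h => hFnmono h x
    have h2 : Tendsto (fun n => Fn n x ^ p) atTop (nhds (F x ^ p)) :=
      (ENNReal.continuous_rpow_const.tendsto _).comp h1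
    have h3 : Tendsto (fun n => Fn n x ^ p) atTop (nhds (⨆ n, Fn n x ^ p)) :=
      tendsto_atTop_iSup fun i j h => ENNReal.rpow_le_rpow (hFnmono h x) hp0.le
    exact tendsto_nhds_unique h2 h3
  have hfinal : (∫⁻ x, F x ^ p ∂μ) ≤ RHS ^ p := by
    rw [hsup]
    exact iSup_le hkey
  calc (∫⁻ x, F x ^ p ∂μ) ^ (1 / p) ≤ (RHS ^ p) ^ (1 / p) :=
        ENNReal.rpow_le_rpow hfinal (by positivity)
    _ = RHS := by rw [← ENNReal.rpow_mul, mul_one_div_cancel hp0.ne', ENNReal.rpow_one]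
lemma mixedLNorm_mono (n : ℕ) (P : Fin n → ℝ) (hP : ∀ j, 1 ≤ P j)
    {h k : (Fin n → ℝ) → ℝ≥0∞} (hhk : ∀ x, h x ≤ k x) :
    mixedLNorm n P h ≤ mixedLNorm n P k := by
  induction n with
  | zero => exact hhk _
  | succ n IH =>
    refine IH _ (fun j => hP j.succ) (fun v => ?_)
    refine ENNReal.rpow_le_rpow (lintegral_mono fun t => ?_) (by have h1 := hP 0; positivity)
    exact ENNReal.rpow_le_rpow (hhk _) (le_trans zero_le_one (hP 0))

lemma piFinSuccAbove_symm_eq_cons {n : ℕ} (y : ℝ × (Fin n → ℝ)) :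
    (MeasurableEquiv.piFinSuccAbove (fun _ : Fin (n + 1) => ℝ) 0).symm y
      = Fin.cons y.1 y.2 := by
  simp only [MeasurableEquiv.piFinSuccAbove, MeasurableEquiv.symm_mk, MeasurableEquiv.coe_mk,
    Equiv.symm_symm, Fin.insertNthEquiv_apply]
  exact Fin.insertNth_zero' y.1 y.2

lemma mixedLNorm_ae_lt_top (n : ℕ) (R : Fin n → ℝ) (hR : ∀ j, 1 ≤ R j)
    (h : (Fin n → ℝ) → ℝ≥0∞) (mh : Measurable h) (hfin : mixedLNorm n R h ≠ ∞) :
    ∀ᵐ x : Fin n → ℝ, h x < ∞ := by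
  induction n with
  | zero =>
    refine Filter.Eventually.of_forall fun x => ?_
    have hx : x = (fun i => i.elim0) := Subsingleton.elim _ _
    rw [hx, lt_top_iff_ne_top]
    exact hfin
  | succ n IH =>
    have hR0 : (0:ℝ) < R 0 := lt_of_lt_of_le zero_lt_one (hR 0)
    set G : (Fin n → ℝ) → ℝ≥0∞ :=
      fun v => (∫⁻ t : ℝ, h (Fin.cons t v) ^ R 0) ^ (1 / R 0) with hGdef
    have mcons : Measurable fun p : ℝ × (Fin n → ℝ) => h (Fin.cons p.1 p.2) ^ R 0 :=
      (mh.comp measurable_finCons).pow_const _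
    have mG : Measurable G := (Measurable.lintegral_prod_left' mcons).pow_const _
    have hae : ∀ᵐ v : Fin n → ℝ, G v < ∞ := IH _ (fun j => hR j.succ) G mG hfin
    have hiter : ∀ᵐ v : Fin n → ℝ, ∀ᵐ t : ℝ, h (Fin.cons t v) < ∞ := by
      filter_upwards [hae] with v hv
      have hint : (∫⁻ t : ℝ, h (Fin.cons t v) ^ R 0) ≠ ∞ := by
        intro hcon
        rw [hGdef] at hv
        simp only [hcon, ENNReal.top_rpow_of_pos (by positivity : (0:ℝ) < 1 / R 0)] at hv
        exact absurd hv (lt_irrefl _)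
      have mht : Measurable fun t : ℝ => h (Fin.cons t v) ^ R 0 :=
        (mh.comp (measurable_finCons.comp (measurable_id.prodMk measurable_const))).pow_const _
      filter_upwards [ae_lt_top mht hint] with t ht
      by_contra hcon
      rw [not_lt, top_le_iff] at hcon
      rw [hcon, ENNReal.top_rpow_of_pos hR0] at ht
      exact absurd ht (lt_irrefl _)
    -- transfer to the product space and back
    set e := MeasurableEquiv.piFinSuccAbove (fun _ : Fin (n + 1) => ℝ) 0 with he
    have hmp := measurePreserving_piFinSuccAbove (fun _ : Fin (n + 1) => (volume : Measure ℝ)) 0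
    set s : Set (ℝ × (Fin n → ℝ)) := {y | h (Fin.cons y.1 y.2) = ∞} with hs
    have hsm : MeasurableSet s := (mh.comp measurable_finCons) (measurableSet_singleton ∞)
    have hprod : ((volume : Measure ℝ).prod (Measure.pi fun _ : Fin n => (volume : Measure ℝ))) s
        = 0 := by
      rw [Measure.prod_apply_symm hsm]
      have hz : ∀ᵐ v : Fin n → ℝ, (volume ((fun t : ℝ => (t, v)) ⁻¹' s) : ℝ≥0∞) = 0 := by
        filter_upwards [hiter] with v hv
        have : (fun t : ℝ => (t, v)) ⁻¹' s = {t : ℝ | ¬ h (Fin.cons t v) < ∞} := by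
          ext t
          simp [hs, lt_top_iff_ne_top]
        rw [this]
        exact hv
      rw [← volume_pi, lintegral_congr_ae hz, lintegral_zero]
    have hN : (volume : Measure (Fin (n + 1) → ℝ)) {x | h x = ∞} = 0 := by
      have hpre : e ⁻¹' s = {x | h x = ∞} := by
        ext x
        simp only [Set.mem_preimage, hs, Set.mem_setOf_eq]
        rw [show (Fin.cons (e x).1 (e x).2 : Fin (n + 1) → ℝ) = e.symm (e x) from
          (piFinSuccAbove_symm_eq_cons _).symm, MeasurableEquiv.symm_apply_apply]
      rw [← hpre, volume_pi, hmp.measure_preimage hsm.nullMeasurableSet]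
      exact hprod
    rw [ae_iff]
    convert hN using 2
    ext x
    simp [lt_top_iff_ne_top]
/-- Mixed-norm Young inequality, `ℝ≥0∞` version. -/
lemma young_ennreal : ∀ (n : ℕ) (P Q R : Fin n → ℝ),
    (∀ j, 1 ≤ P j) → (∀ j, 1 ≤ Q j) → (∀ j, 1 ≤ R j) →
    (∀ j, 1 / P j + 1 / Q j = 1 / R j + 1) →
    ∀ (h k : (Fin n → ℝ) → ℝ≥0∞), Measurable h → Measurable k →
    mixedLNorm n R (fun x => ∫⁻ t, h (x - t) * k t)
      ≤ mixedLNorm n P h * mixedLNorm n Q k := by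
  intro n
  induction n with
  | zero =>
    intro P Q R hP hQ hR hPQR h k mh mk
    have huniv : (volume : Measure (Fin 0 → ℝ)) Set.univ = 1 := by
      rw [volume_pi, Measure.pi_univ]
      simp
    have hval : (∫⁻ t : Fin 0 → ℝ, h ((fun i => i.elim0) - t) * k t)
        = h (fun i => i.elim0) * k (fun i => i.elim0) := by
      have hc : ∀ t : Fin 0 → ℝ, h ((fun i => i.elim0) - t) * k t
          = h (fun i => i.elim0) * k (fun i => i.elim0) := by
        intro t
        congr 1
        · congr 1
          exact Subsingleton.elim _ _
        · congr 1
          exact Subsingleton.elim _ _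
      rw [lintegral_congr hc, lintegral_const, huniv, mul_one]
    show (∫⁻ t : Fin 0 → ℝ, h ((fun i => i.elim0) - t) * k t)
        ≤ h (fun i => i.elim0) * k (fun i => i.elim0)
    exact le_of_eq hval
  | succ n IH =>
    intro P Q R hP hQ hR hPQR h k mh mk
    set Hn : (Fin n → ℝ) → ℝ≥0∞ :=
      fun v => (∫⁻ a : ℝ, h (Fin.cons a v) ^ P 0) ^ (1 / P 0) with hHn
    set Kn : (Fin n → ℝ) → ℝ≥0∞ :=
      fun v => (∫⁻ a : ℝ, k (Fin.cons a v) ^ Q 0) ^ (1 / Q 0) with hKn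
    have mHn : Measurable Hn :=
      (Measurable.lintegral_prod_left' ((mh.comp measurable_finCons).pow_const _)).pow_const _
    have mKn : Measurable Kn :=
      (Measurable.lintegral_prod_left' ((mk.comp measurable_finCons).pow_const _)).pow_const _
    have claim : ∀ v : Fin n → ℝ,
        (∫⁻ s : ℝ, (∫⁻ t, h (Fin.cons s v - t) * k t) ^ R 0) ^ (1 / R 0)
          ≤ ∫⁻ w : Fin n → ℝ, Hn (v - w) * Kn w := by
      intro v
      set C : ℝ → (Fin n → ℝ) → ℝ≥0∞ :=
        fun s w => ∫⁻ b : ℝ, h (Fin.cons (s - b) (v - w)) * k (Fin.cons b w) with hC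
      have mC : Measurable (Function.uncurry C) := by
        apply Measurable.lintegral_prod_right'
          (f := fun zb : (ℝ × (Fin n → ℝ)) × ℝ =>
            h (Fin.cons (zb.1.1 - zb.2) (v - zb.1.2)) * k (Fin.cons zb.2 zb.1.2))
        refine Measurable.mul ?_ ?_
        · exact mh.comp (measurable_finCons.comp
            ((measurable_fst.fst.sub measurable_snd).prodMk
              (measurable_const.sub measurable_fst.snd)))
        · exact mk.comp (measurable_finCons.comp (measurable_snd.prodMk measurable_fst.snd))
      have e1 : ∀ s : ℝ, (∫⁻ t, h (Fin.cons s v - t) * k t) = ∫⁻ w, C s w := by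
        intro s
        refine (lintegral_fin_succ (fun t => h (Fin.cons s v - t) * k t) (by fun_prop)).trans ?_
        refine lintegral_congr fun w => ?_
        refine lintegral_congr fun b => ?_
        rw [cons_sub_cons]
      calc (∫⁻ s : ℝ, (∫⁻ t, h (Fin.cons s v - t) * k t) ^ R 0) ^ (1 / R 0)
          = (∫⁻ s : ℝ, (∫⁻ w, C s w) ^ R 0) ^ (1 / R 0) := by
            congr 1
            exact lintegral_congr fun s => by rw [e1 s]
        _ ≤ ∫⁻ w, (∫⁻ s : ℝ, C s w ^ R 0) ^ (1 / R 0) :=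
            minkowski_lintegral volume volume (hR 0) C mC
        _ ≤ ∫⁻ w, Hn (v - w) * Kn w := by
            refine lintegral_mono fun w => ?_
            exact young_one_dim (hP 0) (hQ 0) (hR 0) (hPQR 0)
              (fun a => h (Fin.cons a (v - w))) (fun a => k (Fin.cons a w))
              (mh.comp (measurable_finCons.comp (measurable_id.prodMk measurable_const)))
              (mk.comp (measurable_finCons.comp (measurable_id.prodMk measurable_const)))
    calc mixedLNorm (n + 1) R (fun x => ∫⁻ t, h (x - t) * k t)
        = mixedLNorm n (fun i => R i.succ)
            (fun v => (∫⁻ s : ℝ, (∫⁻ t, h (Fin.cons s v - t) * k t) ^ R 0) ^ (1 / R 0)) := by rfl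
      _ ≤ mixedLNorm n (fun i => R i.succ) (fun v => ∫⁻ w, Hn (v - w) * Kn w) :=
          mixedLNorm_mono n _ (fun j => hR j.succ) claim
      _ ≤ mixedLNorm n (fun i => P i.succ) Hn * mixedLNorm n (fun i => Q i.succ) Kn :=
          IH _ _ _ (fun j => hP j.succ) (fun j => hQ j.succ) (fun j => hR j.succ)
            (fun j => hPQR j.succ) Hn Kn mHn mKn
      _ = mixedLNorm (n + 1) P h * mixedLNorm (n + 1) Q k := rfl
end Helpers

/-- Mixed-norm Young's inequality for signed functions: if `f ∈ L^P` and `g ∈ L^Q`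
then the convolution `f * g` converges absolutely almost everywhere and satisfies
`‖f * g‖_{L^R} ≤ ‖f‖_{L^P} ‖g‖_{L^Q}`. -/
theorem mixed_norm_young_signed
    (n : ℕ) (P Q R : Fin n → ℝ)
    (hP : ∀ j, 1 ≤ P j) (hQ : ∀ j, 1 ≤ Q j) (hR : ∀ j, 1 ≤ R j)
    (hPQR : ∀ j, 1 / P j + 1 / Q j = 1 / R j + 1)
    (f g : (Fin n → ℝ) → ℝ) (hf : Measurable f) (hg : Measurable g)
    (hfP : mixedLNorm n P (fun x => ((‖f x‖₊ : ℝ≥0∞))) ≠ ∞)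
    (hgQ : mixedLNorm n Q (fun x => ((‖g x‖₊ : ℝ≥0∞))) ≠ ∞) :
    (∀ᵐ x : Fin n → ℝ, Integrable (fun t => f (x - t) * g t)) ∧
      mixedLNorm n R (fun x => ((‖∫ t, f (x - t) * g t‖₊ : ℝ≥0∞)))
        ≤ mixedLNorm n P (fun x => ((‖f x‖₊ : ℝ≥0∞))) * mixedLNorm n Q (fun x => ((‖g x‖₊ : ℝ≥0∞))) := by
  set F : (Fin n → ℝ) → ℝ≥0∞ := fun x => (‖f x‖₊ : ℝ≥0∞) with hF
  set G : (Fin n → ℝ) → ℝ≥0∞ := fun x => (‖g x‖₊ : ℝ≥0∞) with hG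
  have mF : Measurable F := hf.nnnorm.coe_nnreal_ennreal
  have mG : Measurable G := hg.nnnorm.coe_nnreal_ennreal
  set Conv : (Fin n → ℝ) → ℝ≥0∞ := fun x => ∫⁻ t, F (x - t) * G t with hConv
  have mConv : Measurable Conv := by
    apply Measurable.lintegral_prod_right' (f := fun p : (Fin n → ℝ) × (Fin n → ℝ) => F (p.1 - p.2) * G p.2)
    exact ((mF.comp (measurable_fst.sub measurable_snd)).mul (mG.comp measurable_snd))
  have hyoung : mixedLNorm n R Conv ≤ mixedLNorm n P F * mixedLNorm n Q G :=
    young_ennreal n P Q R hP hQ hR hPQR F G mF mG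
  have hConvfin : mixedLNorm n R Conv ≠ ∞ :=
    ne_top_of_le_ne_top (ENNReal.mul_ne_top hfP hgQ) hyoung
  have hae : ∀ᵐ x : Fin n → ℝ, Conv x < ∞ :=
    mixedLNorm_ae_lt_top n R hR Conv mConv hConvfin
  constructor
  · filter_upwards [hae] with x hx
    refine ⟨((hf.comp (measurable_const.sub measurable_id)).mul hg).aestronglyMeasurable, ?_⟩
    show (∫⁻ t, (‖f (x - t) * g t‖₊ : ℝ≥0∞)) < ∞
    calc ∫⁻ t, (‖f (x - t) * g t‖₊ : ℝ≥0∞) = Conv x := by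
          simp only [hConv, nnnorm_mul, ENNReal.coe_mul, hF, hG]
      _ < ∞ := hx
  · refine le_trans (mixedLNorm_mono n R hR (fun x => ?_)) hyoung
    calc (‖∫ t, f (x - t) * g t‖₊ : ℝ≥0∞) ≤ ∫⁻ t, (‖f (x - t) * g t‖₊ : ℝ≥0∞) :=
          enorm_integral_le_lintegral_enorm _
      _ = Conv x := by simp only [hConv, nnnorm_mul, ENNReal.coe_mul, hF, hG]
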